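/- Let η > 0 be such that any perturbation of ℤ by less than η (coordinate-wise) remains a Riesz basis of exponentials for L²[0,1]. Then there exists a sequence Λ ⊆ ℤ such that E(Λ) is a Riesz basis of L²[0, η]. -/

import Mathlib

open MeasureTheory Complex
open scoped Real

/-- The exponential `e_λ(t) = e^{2πiλt}`. -/
noncomputable def expF (l t : ℝ) : ℂ := Complex.exp (2 * π * Complex.I * l * t)

/-- `E(Λ) = {e_λ}_{λ∈Λ}` is a Riesz basis of `L²(S)`: it is complete and satisfies
two-sided ℓ²-synthesis bounds on finitely supported coefficient sequences. -/
def IsExpRieszBasis (S : Set ℝ) (Λ : Set ℝ) : Prop :=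
  (∀ f : ℝ → ℂ, MemLp f 2 (volume.restrict S) →
      (∀ l : Λ, ∫ t in S, f t * Complex.exp (-(2 * π * Complex.I * (l : ℝ) * t)) = 0) →
      ∀ᵐ t ∂(volume.restrict S), f t = 0) ∧
  ∃ c C : ℝ, 0 < c ∧ 0 < C ∧ ∀ a : Λ →₀ ℂ,
    c * ∑ l ∈ a.support, ‖a l‖ ^ 2 ≤
        ∫ t in S, ‖∑ l ∈ a.support, a l * expF (l : ℝ) t‖ ^ 2 ∧
    (∫ t in S, ‖∑ l ∈ a.support, a l * expF (l : ℝ) t‖ ^ 2) ≤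
        C * ∑ l ∈ a.support, ‖a l‖ ^ 2

lemma scale_integral {E : Type*} [NormedAddCommGroup E] [NormedSpace ℝ E]
    {η : ℝ} (hη : 0 < η) (g : ℝ → E) :
    η • ∫ s in Set.Icc (0:ℝ) 1, g (η * s) = ∫ t in Set.Icc 0 η, g t := by
  rw [integral_Icc_eq_integral_Ioc, integral_Icc_eq_integral_Ioc,
    ← intervalIntegral.integral_of_le (zero_le_one), ← intervalIntegral.integral_of_le hη.le]
  simpa using intervalIntegral.smul_integral_comp_mul_left g η

lemma scale_map {η : ℝ} (hη : 0 < η) :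
    (volume.restrict (Set.Icc (0:ℝ) 1)).map (η * ·) =
      ENNReal.ofReal η⁻¹ • volume.restrict (Set.Icc 0 η) := by
  have h1 : ((η * ·) ⁻¹' Set.Icc (0:ℝ) η) = Set.Icc 0 1 := by
    rw [Set.preimage_const_mul_Icc₀ _ _ hη]
    simp [div_self hη.ne']
  rw [← h1, ← Measure.restrict_map (measurable_const_mul η) measurableSet_Icc,
    Real.map_volume_mul_left hη.ne', abs_of_pos (inv_pos.2 hη), Measure.restrict_smul]

lemma memLp_smul_measure_iff {α : Type*} [MeasurableSpace α] {c : ENNReal} (hc0 : c ≠ 0)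
    (hct : c ≠ ⊤) {f : α → ℂ} {μ : Measure α} :
    MemLp f 2 (c • μ) ↔ MemLp f 2 μ := by
  constructor
  · intro h
    have := h.smul_measure (c := c⁻¹) (ENNReal.inv_ne_top.2 hc0)
    rwa [smul_smul, ENNReal.inv_mul_cancel hc0 hct, one_smul] at this
  · intro h; exact h.smul_measure hct

lemma mulLeft_embedding {η : ℝ} (hη : 0 < η) : MeasurableEmbedding (η * ·) := by
  have := (Homeomorph.mulLeft₀ η hη.ne').measurableEmbedding
  simpa [Homeomorph.coe_mulLeft₀] using this

lemma memLp_scale_iff {η : ℝ} (hη : 0 < η) (f : ℝ → ℂ) :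
    MemLp (fun s => f (η * s)) 2 (volume.restrict (Set.Icc 0 1)) ↔
      MemLp f 2 (volume.restrict (Set.Icc 0 η)) := by
  have h := (mulLeft_embedding hη).memLp_map_measure_iff (g := f)
    (μ := volume.restrict (Set.Icc (0:ℝ) 1)) (p := 2)
  rw [scale_map hη, memLp_smul_measure_iff (by simp [hη]) ENNReal.ofReal_ne_top] at h
  exact h.symm

lemma ae_scale_iff {η : ℝ} (hη : 0 < η) (p : ℝ → Prop) :
    (∀ᵐ s ∂(volume.restrict (Set.Icc (0:ℝ) 1)), p (η * s)) ↔
      ∀ᵐ t ∂(volume.restrict (Set.Icc 0 η)), p t := by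
  rw [← (mulLeft_embedding hη).ae_map_iff, scale_map hη,
    Measure.ae_ennreal_smul_measure_iff (by simp [hη])]

lemma scale_vanish {η : ℝ} (hη : 0 < η) (f : ℝ → ℂ) (x : ℝ)
    (h0 : ∫ t in Set.Icc 0 η, f t * Complex.exp (-(2 * π * Complex.I * x * t)) = 0) :
    ∫ s in Set.Icc (0:ℝ) 1, f (η * s) *
      Complex.exp (-(2 * π * Complex.I * (((η * x : ℝ) : ℂ)) * s)) = 0 := by
  have hsc := scale_integral hη (fun t => f t * Complex.exp (-(2 * π * Complex.I * x * t)))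
  rw [h0] at hsc
  have h1 : (∫ s in Set.Icc (0:ℝ) 1, f (η * s) *
        Complex.exp (-(2 * π * Complex.I * (((η * x : ℝ) : ℂ)) * s))) =
      ∫ s in Set.Icc (0:ℝ) 1, f (η * s) *
        Complex.exp (-(2 * π * Complex.I * x * (((η * s : ℝ) : ℂ)))) := by
    refine integral_congr_ae (Filter.Eventually.of_forall fun s => ?_)
    congr 2
    push_cast
    ring
  rw [h1]
  exact (smul_eq_zero.1 hsc).resolve_left hη.ne'

lemma scale_basis {η : ℝ} (hη : 0 < η) (Λ0 : Set ℝ)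
    (hB : IsExpRieszBasis (Set.Icc 0 1) ((η * ·) '' Λ0)) :
    IsExpRieszBasis (Set.Icc 0 η) Λ0 := by
  constructor
  · intro f hf hortho
    have hFmem : MemLp (fun s => f (η * s)) 2 (volume.restrict (Set.Icc 0 1)) :=
      (memLp_scale_iff hη f).2 hf
    have horthoF : ∀ l : ((η * ·) '' Λ0), ∫ s in Set.Icc (0:ℝ) 1,
        f (η * s) * Complex.exp (-(2 * π * Complex.I * (l : ℝ) * s)) = 0 := by
      rintro ⟨l, x, hx, rfl⟩
      exact scale_vanish hη f x (hortho ⟨x, hx⟩)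
    have hae := hB.1 (fun s => f (η * s)) hFmem horthoF
    exact (ae_scale_iff hη (fun t => f t = 0)).1 hae
  · obtain ⟨c, C, hc, hC, hbnd⟩ := hB.2
    refine ⟨η * c, η * C, by positivity, by positivity, fun a => ?_⟩
    have hmem : ∀ x : Λ0, η * (x : ℝ) ∈ (η * ·) '' Λ0 := fun x => ⟨x, x.2, rfl⟩
    set e : Λ0 ↪ ((η * ·) '' Λ0) := ⟨fun x => ⟨η * (x : ℝ), hmem x⟩, by
      intro x y hxy
      have h := congrArg Subtype.val hxy
      simp only at h
      exact Subtype.ext (mul_left_cancel₀ hη.ne' h)⟩ with he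
    set b : ((η * ·) '' Λ0) →₀ ℂ := Finsupp.embDomain e a with hb
    obtain ⟨h1, h2⟩ := hbnd b
    have hsum : ∑ l ∈ b.support, ‖b l‖ ^ 2 = ∑ l ∈ a.support, ‖a l‖ ^ 2 := by
      rw [hb, Finsupp.support_embDomain, Finset.sum_map]
      exact Finset.sum_congr rfl fun x _ => by rw [Finsupp.embDomain_apply_self]
    have hfun : ∀ s : ℝ, (∑ l ∈ b.support, b l * expF (l : ℝ) s) =
        ∑ l ∈ a.support, a l * expF (l : ℝ) (η * s) := by
      intro s
      rw [hb, Finsupp.support_embDomain, Finset.sum_map]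
      refine Finset.sum_congr rfl fun x _ => ?_
      rw [Finsupp.embDomain_apply_self]
      congr 1
      show expF (η * (x : ℝ)) s = expF (x : ℝ) (η * s)
      unfold expF
      congr 1
      push_cast
      ring
    have hint : (∫ t in Set.Icc (0:ℝ) η, ‖∑ l ∈ a.support, a l * expF (l : ℝ) t‖ ^ 2) =
        η * ∫ s in Set.Icc (0:ℝ) 1, ‖∑ l ∈ b.support, b l * expF (l : ℝ) s‖ ^ 2 := by
      rw [← scale_integral hη (fun t => ‖∑ l ∈ a.support, a l * expF (l : ℝ) t‖ ^ 2),
        smul_eq_mul]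
      congr 1
      refine integral_congr_ae (Filter.Eventually.of_forall fun s => ?_)
      show ‖∑ l ∈ a.support, a l * expF (l : ℝ) (η * s)‖ ^ 2 =
        ‖∑ l ∈ b.support, b l * expF (l : ℝ) s‖ ^ 2
      rw [hfun s]
    constructor
    · calc η * c * ∑ l ∈ a.support, ‖a l‖ ^ 2
          = η * (c * ∑ l ∈ b.support, ‖b l‖ ^ 2) := by rw [hsum]; ring
        _ ≤ η * ∫ s in Set.Icc (0:ℝ) 1, ‖∑ l ∈ b.support, b l * expF (l : ℝ) s‖ ^ 2 :=
            mul_le_mul_of_nonneg_left h1 hη.le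
        _ = _ := (hint).symm
    · calc (∫ t in Set.Icc (0:ℝ) η, ‖∑ l ∈ a.support, a l * expF (l : ℝ) t‖ ^ 2)
          = η * ∫ s in Set.Icc (0:ℝ) 1, ‖∑ l ∈ b.support, b l * expF (l : ℝ) s‖ ^ 2 := hint
        _ ≤ η * (C * ∑ l ∈ b.support, ‖b l‖ ^ 2) := mul_le_mul_of_nonneg_left h2 hη.le
        _ = η * C * ∑ l ∈ a.support, ‖a l‖ ^ 2 := by rw [hsum]; ring

/-- If every coordinate-wise perturbation of `ℤ` by less than `η` remains a Riesz basis
of exponentials for `L²[0,1]`, then some `Λ ⊆ ℤ` gives a Riesz basis of `L²[0,η]`. -/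
theorem riesz_basis_in_integers_for_short_interval (η : ℝ) (hη : 0 < η)
    (hstab : ∀ Γ : ℤ → ℝ, (∀ n : ℤ, |Γ n - n| < η) →
      IsExpRieszBasis (Set.Icc 0 1) (Set.range Γ)) :
    ∃ Λ : Set ℝ, Λ ⊆ Set.range ((↑) : ℤ → ℝ) ∧
      IsExpRieszBasis (Set.Icc 0 η) Λ := by
  refine ⟨Set.range (fun n : ℤ => ((round ((n : ℝ) / η) : ℤ) : ℝ)), ?_, ?_⟩
  · rintro x ⟨n, rfl⟩; exact ⟨round ((n : ℝ) / η), rfl⟩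
  · refine scale_basis hη _ ?_
    have himg : (η * ·) '' Set.range (fun n : ℤ => ((round ((n : ℝ) / η) : ℤ) : ℝ)) =
        Set.range (fun n : ℤ => η * ((round ((n : ℝ) / η) : ℤ) : ℝ)) := by
      rw [← Set.range_comp]; rfl
    rw [himg]
    refine hstab _ fun n => ?_
    have h2 : |((n:ℝ)/η) - ((round ((n : ℝ) / η) : ℤ) : ℝ)| ≤ 1/2 := abs_sub_round _
    have h3 : η * ((round ((n : ℝ) / η) : ℤ) : ℝ) - n =
        η * (((round ((n : ℝ) / η) : ℤ) : ℝ) - (n:ℝ)/η) := by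
      field_simp
    rw [h3, abs_mul, abs_of_pos hη, abs_sub_comm]
    calc η * |(n:ℝ)/η - ((round ((n : ℝ) / η) : ℤ) : ℝ)| ≤ η * (1/2) :=
          mul_le_mul_of_nonneg_left h2 hη.le
      _ < η := by linarith
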